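/- For every u ∈ ℂ with u ∉ {0,1} and each m = 1,2,…,8, the multiple m•P of P = (0,0) on E₂(u) is a nonzero affine point whose coordinates x(mP), y(mP) ∈ ℂ(T) are polynomials in T of degree at most 4 and at most 6 respectively; that is, each of P, 2P, …, 8P is an integral point of the arithmetic-genus-2 model E₂(u). -/

import Mathlib

open Polynomial WeierstrassCurve

/-- The dehomogenized curve `E₂(u)` of Elkies' paper, over `ℂ(T)`:
`Y² + (T² + (u−2)T − 1)XY − T²(T+1)(T+u)(T+u−1)Y = X³ − T(T+1)(T+u)X²`. -/
noncomputable def E₂ (u : ℂ) : WeierstrassCurve.Affine (RatFunc ℂ) where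
  a₁ := algebraMap (Polynomial ℂ) (RatFunc ℂ) (X ^ 2 + C (u - 2) * X - 1)
  a₂ := algebraMap (Polynomial ℂ) (RatFunc ℂ) (-(X * (X + 1) * (X + C u)))
  a₃ := algebraMap (Polynomial ℂ) (RatFunc ℂ)
    (-(X ^ 2 * (X + 1) * (X + C u) * (X + C (u - 1))))
  a₄ := 0
  a₆ := 0

/-- `Q` is a nonzero point whose coordinates are polynomials in `T` of degrees
at most `2n` and `3n` respectively: an integral point of the genus-`n` model. -/
def IsIntegralPoint (n : ℕ) {W : WeierstrassCurve.Affine (RatFunc ℂ)}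
    (Q : W.Point) : Prop :=
  ∃ (x y : RatFunc ℂ) (h : W.Nonsingular x y) (px py : Polynomial ℂ),
    Q = WeierstrassCurve.Affine.Point.some x y h ∧
    x = algebraMap (Polynomial ℂ) (RatFunc ℂ) px ∧
    y = algebraMap (Polynomial ℂ) (RatFunc ℂ) py ∧
    px.degree ≤ (2 * n : ℕ) ∧ py.degree ≤ (3 * n : ℕ)

namespace Stmt5Aux

noncomputable abbrev φ : Polynomial ℂ →+* RatFunc ℂ :=
  (algebraMap (Polynomial ℂ) (RatFunc ℂ))

/- coordinates of m•P on E₂ u, m = 2,…,8 -/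
noncomputable def px2 (u : ℂ) : Polynomial ℂ := X * (X + 1) * (X + C u)
noncomputable def py2 (u : ℂ) : Polynomial ℂ := X * (X + 1) ^ 2 * (X + C u)
noncomputable def px3 (u : ℂ) : Polynomial ℂ := X * (X + 1) * (X + C (u - 1))
noncomputable def py3 (u : ℂ) : Polynomial ℂ := X ^ 2 * (X + 1) * (X + C (u - 1))
noncomputable def px4 (u : ℂ) : Polynomial ℂ := X ^ 2 * (X + C u)
noncomputable def py4 (u : ℂ) : Polynomial ℂ := X ^ 2 * (X + C u) ^ 2
noncomputable def px5 (u : ℂ) : Polynomial ℂ := (X + 1) * (X + C u) * (X + C (u - 1))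
noncomputable def py5 (u : ℂ) : Polynomial ℂ :=
  C (1 - u) * (X + 1) ^ 2 * (X + C u) * (X + C (u - 1))
noncomputable def px6 (u : ℂ) : Polynomial ℂ := C (1 - u) * X ^ 2 * (X + 1)
noncomputable def py6 (u : ℂ) : Polynomial ℂ := C u * X ^ 3 * (X + 1) ^ 2
noncomputable def px7 (u : ℂ) : Polynomial ℂ :=
  C (u * ((u - 1)⁻¹) ^ 2) * (X * (X + 1) * (X + C u) * (X + C (u - 1)))
noncomputable def py7 (u : ℂ) : Polynomial ℂ :=
  C (((u - 1)⁻¹) ^ 3) * (X * (X + 1) * (X + C u) ^ 2 * (X + C (u - 1)) * (C u * X + C (u - 1)))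
noncomputable def px8 (u : ℂ) : Polynomial ℂ :=
  C ((u - 1) * (u⁻¹) ^ 2) * (X * (X + C u) * (C u * X + C (u - 1)))
noncomputable def py8 (u : ℂ) : Polynomial ℂ :=
  C ((u - 1) ^ 2 * (u⁻¹) ^ 3) * (X ^ 2 * (X + C u) * (C u * X + C (2 * u - 1)))

noncomputable def dpoly (u : ℂ) : Polynomial ℂ :=
  X ^ 5 * (X + 1) ^ 4 * (X + C u) ^ 3 * (X + C (u - 1)) ^ 2 *
    (1 + C (6 - 11 * u) * X + C (1 - 8 * u - u * u) * X ^ 2 - C u * X ^ 3)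

lemma E₂_a₁ (u : ℂ) : (E₂ u).a₁ = φ (X ^ 2 + C (u - 2) * X - 1) := rfl
lemma E₂_a₂ (u : ℂ) : (E₂ u).a₂ = φ (-(X * (X + 1) * (X + C u))) := rfl
lemma E₂_a₃ (u : ℂ) :
    (E₂ u).a₃ = φ (-(X ^ 2 * (X + 1) * (X + C u) * (X + C (u - 1)))) := rfl
lemma E₂_a₄ (u : ℂ) : (E₂ u).a₄ = 0 := rfl
lemma E₂_a₆ (u : ℂ) : (E₂ u).a₆ = 0 := rfl

lemma some_congr {F : Type*} [Field F] {W : WeierstrassCurve.Affine F} {x₁ y₁ x₂ y₂ : F}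
    {h : W.Nonsingular x₁ y₁} (hx : x₁ = x₂) (hy : y₁ = y₂) (h' : W.Nonsingular x₂ y₂) :
    WeierstrassCurve.Affine.Point.some _ _ h = WeierstrassCurve.Affine.Point.some _ _ h' := by
  subst hx; subst hy; rfl

lemma add_eq {F : Type*} [Field F] [DecidableEq F] {W : WeierstrassCurve.Affine F} {x₁ y₁ x₃ y₃ : F}
    (h₁ : W.Nonsingular x₁ y₁) (h₀ : W.Nonsingular 0 0) (h₃ : W.Nonsingular x₃ y₃)
    (hx : x₁ ≠ 0)
    (hA : y₁ ^ 2 + W.a₁ * x₁ * y₁ = x₃ * x₁ ^ 2 + W.a₂ * x₁ ^ 2 + x₁ ^ 3)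
    (hB : x₁ * y₃ = y₁ * (x₁ - x₃) - x₁ * y₁ - W.a₁ * x₁ * x₃ - W.a₃ * x₁) :
    WeierstrassCurve.Affine.Point.some _ _ h₁ + WeierstrassCurve.Affine.Point.some _ _ h₀
      = WeierstrassCurve.Affine.Point.some _ _ h₃ := by
  rw [WeierstrassCurve.Affine.Point.add_of_X_ne hx]
  have hs : W.slope x₁ 0 y₁ 0 = y₁ / x₁ := by
    rw [WeierstrassCurve.Affine.slope_of_X_ne hx]; rw [sub_zero, sub_zero]
  have hX : W.addX x₁ 0 (W.slope x₁ 0 y₁ 0) = x₃ := by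
    rw [hs, WeierstrassCurve.Affine.addX]
    field_simp
    linear_combination hA
  refine some_congr hX ?_ h₃
  rw [WeierstrassCurve.Affine.addY, WeierstrassCurve.Affine.negAddY, hX,
    WeierstrassCurve.Affine.negY, hs]
  field_simp
  linear_combination -hB


lemma c0 {u : ℂ} (hu0 : u ≠ 0) : (RatFunc.C u) ≠ 0 := (_root_.map_ne_zero _).mpr hu0

lemma c1 {u : ℂ} (hu1 : u ≠ 1) : (RatFunc.C u) - 1 ≠ 0 := by
  have h : (RatFunc.C u) - 1 = RatFunc.C (u - 1) := by rw [map_sub, map_one]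
  rw [h]
  exact (_root_.map_ne_zero _).mpr (sub_ne_zero.mpr hu1)

lemma hXC (c : ℂ) : (X + C c : Polynomial ℂ) ≠ 0 := (Polynomial.monic_X_add_C c).ne_zero

lemma hX1 : (X + 1 : Polynomial ℂ) ≠ 0 := by rw [← Polynomial.C_1]; exact hXC 1

lemma hlin {u : ℂ} (hu0 : u ≠ 0) (c : ℂ) : (C u * X + C c : Polynomial ℂ) ≠ 0 := by
  intro h
  apply hu0
  simpa [Polynomial.coeff_C] using congrArg (fun p => Polynomial.coeff p 1) h

set_option maxHeartbeats 2000000 in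
lemma eqn2 (u : ℂ) : (E₂ u).Equation (φ (px2 u)) (φ (py2 u)) := by
  rw [WeierstrassCurve.Affine.equation_iff]
  simp only [E₂_a₁, E₂_a₂, E₂_a₃, E₂_a₄, E₂_a₆, px2, py2, px3, py3, px4, py4, px5, py5, px6, py6, px7, py7, px8, py8, dpoly, map_add, map_sub, map_mul, map_pow, map_neg, map_one, map_ofNat, map_zero, map_inv₀, RatFunc.algebraMap_C, RatFunc.algebraMap_X]
  ring

set_option maxHeartbeats 2000000 in
lemma eqn3 (u : ℂ) : (E₂ u).Equation (φ (px3 u)) (φ (py3 u)) := by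
  rw [WeierstrassCurve.Affine.equation_iff]
  simp only [E₂_a₁, E₂_a₂, E₂_a₃, E₂_a₄, E₂_a₆, px2, py2, px3, py3, px4, py4, px5, py5, px6, py6, px7, py7, px8, py8, dpoly, map_add, map_sub, map_mul, map_pow, map_neg, map_one, map_ofNat, map_zero, map_inv₀, RatFunc.algebraMap_C, RatFunc.algebraMap_X]
  ring

set_option maxHeartbeats 2000000 in
lemma eqn4 (u : ℂ) : (E₂ u).Equation (φ (px4 u)) (φ (py4 u)) := by
  rw [WeierstrassCurve.Affine.equation_iff]
  simp only [E₂_a₁, E₂_a₂, E₂_a₃, E₂_a₄, E₂_a₆, px2, py2, px3, py3, px4, py4, px5, py5, px6, py6, px7, py7, px8, py8, dpoly, map_add, map_sub, map_mul, map_pow, map_neg, map_one, map_ofNat, map_zero, map_inv₀, RatFunc.algebraMap_C, RatFunc.algebraMap_X]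
  ring

set_option maxHeartbeats 2000000 in
lemma eqn5 (u : ℂ) : (E₂ u).Equation (φ (px5 u)) (φ (py5 u)) := by
  rw [WeierstrassCurve.Affine.equation_iff]
  simp only [E₂_a₁, E₂_a₂, E₂_a₃, E₂_a₄, E₂_a₆, px2, py2, px3, py3, px4, py4, px5, py5, px6, py6, px7, py7, px8, py8, dpoly, map_add, map_sub, map_mul, map_pow, map_neg, map_one, map_ofNat, map_zero, map_inv₀, RatFunc.algebraMap_C, RatFunc.algebraMap_X]
  ring

set_option maxHeartbeats 2000000 in
lemma eqn6 (u : ℂ) : (E₂ u).Equation (φ (px6 u)) (φ (py6 u)) := by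
  rw [WeierstrassCurve.Affine.equation_iff]
  simp only [E₂_a₁, E₂_a₂, E₂_a₃, E₂_a₄, E₂_a₆, px2, py2, px3, py3, px4, py4, px5, py5, px6, py6, px7, py7, px8, py8, dpoly, map_add, map_sub, map_mul, map_pow, map_neg, map_one, map_ofNat, map_zero, map_inv₀, RatFunc.algebraMap_C, RatFunc.algebraMap_X]
  ring

set_option maxHeartbeats 2000000 in
lemma eqn7 {u : ℂ} (hu0 : u ≠ 0) (hu1 : u ≠ 1) : (E₂ u).Equation (φ (px7 u)) (φ (py7 u)) := by
  rw [WeierstrassCurve.Affine.equation_iff]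
  simp only [E₂_a₁, E₂_a₂, E₂_a₃, E₂_a₄, E₂_a₆, px2, py2, px3, py3, px4, py4, px5, py5, px6, py6, px7, py7, px8, py8, dpoly, map_add, map_sub, map_mul, map_pow, map_neg, map_one, map_ofNat, map_zero, map_inv₀, RatFunc.algebraMap_C, RatFunc.algebraMap_X]
  field_simp [c0 hu0, c1 hu1]
  ring

set_option maxHeartbeats 2000000 in
lemma eqn8 {u : ℂ} (hu0 : u ≠ 0) (hu1 : u ≠ 1) : (E₂ u).Equation (φ (px8 u)) (φ (py8 u)) := by
  rw [WeierstrassCurve.Affine.equation_iff]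
  simp only [E₂_a₁, E₂_a₂, E₂_a₃, E₂_a₄, E₂_a₆, px2, py2, px3, py3, px4, py4, px5, py5, px6, py6, px7, py7, px8, py8, dpoly, map_add, map_sub, map_mul, map_pow, map_neg, map_one, map_ofNat, map_zero, map_inv₀, RatFunc.algebraMap_C, RatFunc.algebraMap_X]
  field_simp [c0 hu0, c1 hu1]
  ring

set_option maxHeartbeats 2000000 in
lemma hA2 (u : ℂ) : (φ (py2 u)) ^ 2 + (E₂ u).a₁ * φ (px2 u) * φ (py2 u)
    = φ (px3 u) * (φ (px2 u)) ^ 2 + (E₂ u).a₂ * (φ (px2 u)) ^ 2 + (φ (px2 u)) ^ 3 := by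
  simp only [E₂_a₁, E₂_a₂, E₂_a₃, E₂_a₄, E₂_a₆, px2, py2, px3, py3, px4, py4, px5, py5, px6, py6, px7, py7, px8, py8, dpoly, map_add, map_sub, map_mul, map_pow, map_neg, map_one, map_ofNat, map_zero, map_inv₀, RatFunc.algebraMap_C, RatFunc.algebraMap_X]
  ring

set_option maxHeartbeats 2000000 in
lemma hB2 (u : ℂ) : φ (px2 u) * φ (py3 u)
    = φ (py2 u) * (φ (px2 u) - φ (px3 u)) - φ (px2 u) * φ (py2 u)
      - (E₂ u).a₁ * φ (px2 u) * φ (px3 u) - (E₂ u).a₃ * φ (px2 u) := by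
  simp only [E₂_a₁, E₂_a₂, E₂_a₃, E₂_a₄, E₂_a₆, px2, py2, px3, py3, px4, py4, px5, py5, px6, py6, px7, py7, px8, py8, dpoly, map_add, map_sub, map_mul, map_pow, map_neg, map_one, map_ofNat, map_zero, map_inv₀, RatFunc.algebraMap_C, RatFunc.algebraMap_X]
  ring

set_option maxHeartbeats 2000000 in
lemma hA3 (u : ℂ) : (φ (py3 u)) ^ 2 + (E₂ u).a₁ * φ (px3 u) * φ (py3 u)
    = φ (px4 u) * (φ (px3 u)) ^ 2 + (E₂ u).a₂ * (φ (px3 u)) ^ 2 + (φ (px3 u)) ^ 3 := by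
  simp only [E₂_a₁, E₂_a₂, E₂_a₃, E₂_a₄, E₂_a₆, px2, py2, px3, py3, px4, py4, px5, py5, px6, py6, px7, py7, px8, py8, dpoly, map_add, map_sub, map_mul, map_pow, map_neg, map_one, map_ofNat, map_zero, map_inv₀, RatFunc.algebraMap_C, RatFunc.algebraMap_X]
  ring

set_option maxHeartbeats 2000000 in
lemma hB3 (u : ℂ) : φ (px3 u) * φ (py4 u)
    = φ (py3 u) * (φ (px3 u) - φ (px4 u)) - φ (px3 u) * φ (py3 u)
      - (E₂ u).a₁ * φ (px3 u) * φ (px4 u) - (E₂ u).a₃ * φ (px3 u) := by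
  simp only [E₂_a₁, E₂_a₂, E₂_a₃, E₂_a₄, E₂_a₆, px2, py2, px3, py3, px4, py4, px5, py5, px6, py6, px7, py7, px8, py8, dpoly, map_add, map_sub, map_mul, map_pow, map_neg, map_one, map_ofNat, map_zero, map_inv₀, RatFunc.algebraMap_C, RatFunc.algebraMap_X]
  ring

set_option maxHeartbeats 2000000 in
lemma hA4 (u : ℂ) : (φ (py4 u)) ^ 2 + (E₂ u).a₁ * φ (px4 u) * φ (py4 u)
    = φ (px5 u) * (φ (px4 u)) ^ 2 + (E₂ u).a₂ * (φ (px4 u)) ^ 2 + (φ (px4 u)) ^ 3 := by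
  simp only [E₂_a₁, E₂_a₂, E₂_a₃, E₂_a₄, E₂_a₆, px2, py2, px3, py3, px4, py4, px5, py5, px6, py6, px7, py7, px8, py8, dpoly, map_add, map_sub, map_mul, map_pow, map_neg, map_one, map_ofNat, map_zero, map_inv₀, RatFunc.algebraMap_C, RatFunc.algebraMap_X]
  ring

set_option maxHeartbeats 2000000 in
lemma hB4 (u : ℂ) : φ (px4 u) * φ (py5 u)
    = φ (py4 u) * (φ (px4 u) - φ (px5 u)) - φ (px4 u) * φ (py4 u)
      - (E₂ u).a₁ * φ (px4 u) * φ (px5 u) - (E₂ u).a₃ * φ (px4 u) := by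
  simp only [E₂_a₁, E₂_a₂, E₂_a₃, E₂_a₄, E₂_a₆, px2, py2, px3, py3, px4, py4, px5, py5, px6, py6, px7, py7, px8, py8, dpoly, map_add, map_sub, map_mul, map_pow, map_neg, map_one, map_ofNat, map_zero, map_inv₀, RatFunc.algebraMap_C, RatFunc.algebraMap_X]
  ring

set_option maxHeartbeats 2000000 in
lemma hA5 (u : ℂ) : (φ (py5 u)) ^ 2 + (E₂ u).a₁ * φ (px5 u) * φ (py5 u)
    = φ (px6 u) * (φ (px5 u)) ^ 2 + (E₂ u).a₂ * (φ (px5 u)) ^ 2 + (φ (px5 u)) ^ 3 := by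
  simp only [E₂_a₁, E₂_a₂, E₂_a₃, E₂_a₄, E₂_a₆, px2, py2, px3, py3, px4, py4, px5, py5, px6, py6, px7, py7, px8, py8, dpoly, map_add, map_sub, map_mul, map_pow, map_neg, map_one, map_ofNat, map_zero, map_inv₀, RatFunc.algebraMap_C, RatFunc.algebraMap_X]
  ring

set_option maxHeartbeats 2000000 in
lemma hB5 (u : ℂ) : φ (px5 u) * φ (py6 u)
    = φ (py5 u) * (φ (px5 u) - φ (px6 u)) - φ (px5 u) * φ (py5 u)
      - (E₂ u).a₁ * φ (px5 u) * φ (px6 u) - (E₂ u).a₃ * φ (px5 u) := by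
  simp only [E₂_a₁, E₂_a₂, E₂_a₃, E₂_a₄, E₂_a₆, px2, py2, px3, py3, px4, py4, px5, py5, px6, py6, px7, py7, px8, py8, dpoly, map_add, map_sub, map_mul, map_pow, map_neg, map_one, map_ofNat, map_zero, map_inv₀, RatFunc.algebraMap_C, RatFunc.algebraMap_X]
  ring

set_option maxHeartbeats 2000000 in
lemma hA6 {u : ℂ} (hu0 : u ≠ 0) (hu1 : u ≠ 1) : (φ (py6 u)) ^ 2 + (E₂ u).a₁ * φ (px6 u) * φ (py6 u)
    = φ (px7 u) * (φ (px6 u)) ^ 2 + (E₂ u).a₂ * (φ (px6 u)) ^ 2 + (φ (px6 u)) ^ 3 := by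
  simp only [E₂_a₁, E₂_a₂, E₂_a₃, E₂_a₄, E₂_a₆, px2, py2, px3, py3, px4, py4, px5, py5, px6, py6, px7, py7, px8, py8, dpoly, map_add, map_sub, map_mul, map_pow, map_neg, map_one, map_ofNat, map_zero, map_inv₀, RatFunc.algebraMap_C, RatFunc.algebraMap_X]
  field_simp [c0 hu0, c1 hu1]
  ring

set_option maxHeartbeats 2000000 in
lemma hB6 {u : ℂ} (hu0 : u ≠ 0) (hu1 : u ≠ 1) : φ (px6 u) * φ (py7 u)
    = φ (py6 u) * (φ (px6 u) - φ (px7 u)) - φ (px6 u) * φ (py6 u)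
      - (E₂ u).a₁ * φ (px6 u) * φ (px7 u) - (E₂ u).a₃ * φ (px6 u) := by
  simp only [E₂_a₁, E₂_a₂, E₂_a₃, E₂_a₄, E₂_a₆, px2, py2, px3, py3, px4, py4, px5, py5, px6, py6, px7, py7, px8, py8, dpoly, map_add, map_sub, map_mul, map_pow, map_neg, map_one, map_ofNat, map_zero, map_inv₀, RatFunc.algebraMap_C, RatFunc.algebraMap_X]
  field_simp [c0 hu0, c1 hu1]
  ring

set_option maxHeartbeats 2000000 in
lemma hA7 {u : ℂ} (hu0 : u ≠ 0) (hu1 : u ≠ 1) : (φ (py7 u)) ^ 2 + (E₂ u).a₁ * φ (px7 u) * φ (py7 u)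
    = φ (px8 u) * (φ (px7 u)) ^ 2 + (E₂ u).a₂ * (φ (px7 u)) ^ 2 + (φ (px7 u)) ^ 3 := by
  simp only [E₂_a₁, E₂_a₂, E₂_a₃, E₂_a₄, E₂_a₆, px2, py2, px3, py3, px4, py4, px5, py5, px6, py6, px7, py7, px8, py8, dpoly, map_add, map_sub, map_mul, map_pow, map_neg, map_one, map_ofNat, map_zero, map_inv₀, RatFunc.algebraMap_C, RatFunc.algebraMap_X]
  field_simp [c0 hu0, c1 hu1]
  ring

set_option maxHeartbeats 4000000 in
lemma hB7 {u : ℂ} (hu0 : u ≠ 0) (hu1 : u ≠ 1) : φ (px7 u) * φ (py8 u)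
    = φ (py7 u) * (φ (px7 u) - φ (px8 u)) - φ (px7 u) * φ (py7 u)
      - (E₂ u).a₁ * φ (px7 u) * φ (px8 u) - (E₂ u).a₃ * φ (px7 u) := by
  simp only [E₂_a₁, E₂_a₂, E₂_a₃, E₂_a₄, E₂_a₆, px2, py2, px3, py3, px4, py4, px5, py5, px6, py6, px7, py7, px8, py8, dpoly, map_add, map_sub, map_mul, map_pow, map_neg, map_one, map_ofNat, map_zero, map_inv₀, RatFunc.algebraMap_C, RatFunc.algebraMap_X]
  set a := RatFunc.C u with ha
  set x := (RatFunc.X : RatFunc ℂ) with hx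
  set w := (a - 1)⁻¹ with hw
  set v := a⁻¹ with hv
  have r1 : (a - 1) * w = 1 := mul_inv_cancel₀ (c1 hu1)
  have r2 : a * v = 1 := mul_inv_cancel₀ (c0 hu0)
  refine mul_left_cancel₀ (a := (a - 1) ^ 3 * a ^ 3)
    (mul_ne_zero (pow_ne_zero 3 (c1 hu1)) (pow_ne_zero 3 (c0 hu0))) ?_
  linear_combination (a ^ 3 * x ^ 5 * v ^ 2 - (1) * a ^ 3 * x ^ 5 * w * v ^ 2 + a ^ 3 * x ^ 5 * w ^ 2 * v ^ 2 - (1) * a ^ 3 * x ^ 7 * v ^ 2 + a ^ 3 * x ^ 7 * w * v ^ 2 - (1) * a ^ 3 * x ^ 7 * w ^ 2 * v ^ 2 + 2 * a ^ 4 * x ^ 4 * v ^ 2 - (2) * a ^ 4 * x ^ 4 * w * v ^ 2 + 3 * a ^ 4 * x ^ 4 * w ^ 2 * v ^ 2 + a ^ 4 * x ^ 5 - (6) * a ^ 4 * x ^ 5 * v ^ 2 - (1) * a ^ 4 * x ^ 5 * v ^ 3 - (1) * a ^ 4 * x ^ 5 * w + 7 * a ^ 4 * x ^ 5 * w * v ^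 2 + a ^ 4 * x ^ 5 * w * v ^ 3 - (6) * a ^ 4 * x ^ 5 * w ^ 2 * v ^ 2 - (4) * a ^ 4 * x ^ 6 * v ^ 2 + 4 * a ^ 4 * x ^ 6 * w * v ^ 2 - (6) * a ^ 4 * x ^ 6 * w ^ 2 * v ^ 2 - (2) * a ^ 4 * x ^ 7 + 5 * a ^ 4 * x ^ 7 * v ^ 2 + a ^ 4 * x ^ 7 * v ^ 3 + 2 * a ^ 4 * x ^ 7 * w - (6) * a ^ 4 * x ^ 7 * w * v ^ 2 - (1) * a ^ 4 * x ^ 7 * w * v ^ 3 + 5 * a ^ 4 * x ^ 7 * w ^ 2 * v ^ 2 + a ^ 4 * x ^ 8 * v ^ 2 - (1) * a ^ 4 * x ^ 8 * w * v ^ 2 + 2 * a ^ 4 * x ^ 8 * w ^ 2 * v ^ 2 + a ^ 4 * x ^ 9 - (1) * a ^ 4 * x ^ 9 * w + a ^ 5 * x ^ 3 * v ^ 2 - (1) * a ^ 5 * x ^ 3 * w * v ^ 2 + 3 * a ^ 5 * x ^ 3 * w ^ 2 * v ^ 2 + 2 * a ^ 5 * x ^ 4 - (12) * a ^ 5 *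 x ^ 4 * v ^ 2 - (2) * a ^ 5 * x ^ 4 * v ^ 3 - (2) * a ^ 5 * x ^ 4 * w + 14 * a ^ 5 * x ^ 4 * w * v ^ 2 + 2 * a ^ 5 * x ^ 4 * w * v ^ 3 - (18) * a ^ 5 * x ^ 4 * w ^ 2 * v ^ 2 - (3) * a ^ 5 * x ^ 5 + 9 * a ^ 5 * x ^ 5 * v ^ 2 + 6 * a ^ 5 * x ^ 5 * v ^ 3 + 4 * a ^ 5 * x ^ 5 * w - (15) * a ^ 5 * x ^ 5 * w * v ^ 2 - (7) * a ^ 5 * x ^ 5 * w * v ^ 3 + 3 * a ^ 5 * x ^ 5 * w ^ 2 * v ^ 2 - (6) * a ^ 5 * x ^ 6 + 19 * a ^ 5 * x ^ 6 * v ^ 2 + 4 * a ^ 5 * x ^ 6 * v ^ 3 + 6 * a ^ 5 * x ^ 6 * w - (23) * a ^ 5 * x ^ 6 * w * v ^ 2 - (4) * a ^ 5 * x ^ 6 * w * v ^ 3 + 30 * a ^ 5 * x ^ 6 * w ^ 2 * v ^ 2 + 4 * a ^ 5 * x ^ 7 - (6) * a ^ 5 * x ^ 7 * v ^ 2 - (5)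 * a ^ 5 * x ^ 7 * v ^ 3 - (6) * a ^ 5 * x ^ 7 * w + 11 * a ^ 5 * x ^ 7 * w * v ^ 2 + 6 * a ^ 5 * x ^ 7 * w * v ^ 3 - (1) * a ^ 5 * x ^ 7 * w ^ 2 * v ^ 2 + 4 * a ^ 5 * x ^ 8 - (3) * a ^ 5 * x ^ 8 * v ^ 2 - (1) * a ^ 5 * x ^ 8 * v ^ 3 - (4) * a ^ 5 * x ^ 8 * w + 4 * a ^ 5 * x ^ 8 * w * v ^ 2 + a ^ 5 * x ^ 8 * w * v ^ 3 - (8) * a ^ 5 * x ^ 8 * w ^ 2 * v ^ 2 - (1) * a ^ 5 * x ^ 9 + 2 * a ^ 5 * x ^ 9 * w - (1) * a ^ 5 * x ^ 9 * w ^ 2 * v ^ 2 + a ^ 6 * x ^ 2 * w ^ 2 * v ^ 2 + a ^ 6 * x ^ 3 - (6) * a ^ 6 * x ^ 3 * v ^ 2 - (1) * a ^ 6 * x ^ 3 * v ^ 3 - (1) * a ^ 6 * x ^ 3 * w + 7 * a ^ 6 * x ^ 3 * w * v ^ 2 + a ^ 6 * x ^ 3 * w * v ^ 3 - (18) * a ^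 6 * x ^ 3 * w ^ 2 * v ^ 2 - (6) * a ^ 6 * x ^ 4 + 26 * a ^ 6 * x ^ 4 * v ^ 2 + 12 * a ^ 6 * x ^ 4 * v ^ 3 + 8 * a ^ 6 * x ^ 4 * w - (38) * a ^ 6 * x ^ 4 * w * v ^ 2 - (14) * a ^ 6 * x ^ 4 * w * v ^ 3 + 35 * a ^ 6 * x ^ 4 * w ^ 2 * v ^ 2 - (3) * a ^ 6 * x ^ 5 + 6 * a ^ 6 * x ^ 5 * v ^ 2 - (9) * a ^ 6 * x ^ 5 * v ^ 3 + 3 * a ^ 6 * x ^ 5 * w * v ^ 2 + 15 * a ^ 6 * x ^ 5 * w * v ^ 3 + 40 * a ^ 6 * x ^ 5 * w ^ 2 * v ^ 2 + 12 * a ^ 6 * x ^ 6 - (30) * a ^ 6 * x ^ 6 * v ^ 2 - (19) * a ^ 6 * x ^ 6 * v ^ 3 - (18) * a ^ 6 * x ^ 6 * w + 49 * a ^ 6 * x ^ 6 * w * v ^ 2 + 23 * a ^ 6 * x ^ 6 * w * v ^ 3 - (45) * a ^ 6 * x ^ 6 * w ^ 2 * v ^ 2 + 4 * a ^ 6 *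 x ^ 7 + 6 * a ^ 6 * x ^ 7 * v ^ 3 - (6) * a ^ 6 * x ^ 7 * w * v ^ 2 - (11) * a ^ 6 * x ^ 7 * w * v ^ 3 - (26) * a ^ 6 * x ^ 7 * w ^ 2 * v ^ 2 - (4) * a ^ 6 * x ^ 8 + 3 * a ^ 6 * x ^ 8 * v ^ 2 + 3 * a ^ 6 * x ^ 8 * v ^ 3 + 8 * a ^ 6 * x ^ 8 * w - (6) * a ^ 6 * x ^ 8 * w * v ^ 2 - (4) * a ^ 6 * x ^ 8 * w * v ^ 3 + 8 * a ^ 6 * x ^ 8 * w ^ 2 * v ^ 2 - (1) * a ^ 6 * x ^ 9 * v ^ 2 - (1) * a ^ 6 * x ^ 9 * w + a ^ 6 * x ^ 9 * w * v ^ 2 + 3 * a ^ 6 * x ^ 9 * w ^ 2 * v ^ 2 - (6) * a ^ 7 * x ^ 2 * w ^ 2 * v ^ 2 - (3) * a ^ 7 * x ^ 3 + 14 * a ^ 7 * x ^ 3 * v ^ 2 + 6 * a ^ 7 * x ^ 3 * v ^ 3 + 4 * a ^ 7 * x ^ 3 * w - (20) * a ^ 7 * x ^ 3 * w * v ^ 2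 - (7) * a ^ 7 * x ^ 3 * w * v ^ 3 + 42 * a ^ 7 * x ^ 3 * w ^ 2 * v ^ 2 + 4 * a ^ 7 * x ^ 4 - (25) * a ^ 7 * x ^ 4 * v ^ 2 - (26) * a ^ 7 * x ^ 4 * v ^ 3 - (10) * a ^ 7 * x ^ 4 * w + 51 * a ^ 7 * x ^ 4 * w * v ^ 2 + 38 * a ^ 7 * x ^ 4 * w * v ^ 3 - (10) * a ^ 7 * x ^ 4 * w ^ 2 * v ^ 2 + 11 * a ^ 7 * x ^ 5 - (26) * a ^ 7 * x ^ 5 * v ^ 2 - (7) * a ^ 7 * x ^ 5 * v ^ 3 - (14) * a ^ 7 * x ^ 5 * w + 32 * a ^ 7 * x ^ 5 * w * v ^ 2 - (2) * a ^ 7 * x ^ 5 * w * v ^ 3 - (94) * a ^ 7 * x ^ 5 * w ^ 2 * v ^ 2 - (2) * a ^ 7 * x ^ 6 + 22 * a ^ 7 * x ^ 6 * v ^ 2 + 30 * a ^ 7 * x ^ 6 * v ^ 3 + 14 * a ^ 7 * x ^ 6 * w - (52) * a ^ 7 * x ^ 6 * w * v ^ 2 - (49) * a ^ 7 * x ^ 6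 * w * v ^ 3 - (6) * a ^ 7 * x ^ 7 + 3 * a ^ 7 * x ^ 7 * v ^ 2 + 2 * a ^ 7 * x ^ 7 * v ^ 3 + 10 * a ^ 7 * x ^ 7 * w - (3) * a ^ 7 * x ^ 7 * w * v ^ 2 + 4 * a ^ 7 * x ^ 7 * w * v ^ 3 + 43 * a ^ 7 * x ^ 7 * w ^ 2 * v ^ 2 - (5) * a ^ 7 * x ^ 8 * v ^ 2 - (3) * a ^ 7 * x ^ 8 * v ^ 3 - (4) * a ^ 7 * x ^ 8 * w + 8 * a ^ 7 * x ^ 8 * w * v ^ 2 + 6 * a ^ 7 * x ^ 8 * w * v ^ 3 + 4 * a ^ 7 * x ^ 8 * w ^ 2 * v ^ 2 + a ^ 7 * x ^ 9 * v ^ 2 - (2) * a ^ 7 * x ^ 9 * w * v ^ 2 - (3) * a ^ 7 * x ^ 9 * w ^ 2 * v ^ 2 + 15 * a ^ 8 * x ^ 2 * w ^ 2 * v ^ 2 + 3 * a ^ 8 * x ^ 3 - (17) * a ^ 8 * x ^ 3 * v ^ 2 - (14) * a ^ 8 * x ^ 3 * v ^ 3 - (6) * a ^ 8 * x ^ 3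 * w + 31 * a ^ 8 * x ^ 3 * w * v ^ 2 + 20 * a ^ 8 * x ^ 3 * w * v ^ 3 - (45) * a ^ 8 * x ^ 3 * w ^ 2 * v ^ 2 + 2 * a ^ 8 * x ^ 4 + 9 * a ^ 8 * x ^ 4 * v ^ 2 + 23 * a ^ 8 * x ^ 4 * v ^ 3 + 2 * a ^ 8 * x ^ 4 * w - (34) * a ^ 8 * x ^ 4 * w * v ^ 2 - (49) * a ^ 8 * x ^ 4 * w * v ^ 3 - (52) * a ^ 8 * x ^ 4 * w ^ 2 * v ^ 2 - (5) * a ^ 8 * x ^ 5 + 27 * a ^ 8 * x ^ 5 * v ^ 2 + 29 * a ^ 8 * x ^ 5 * v ^ 3 + 16 * a ^ 8 * x ^ 5 * w - (53) * a ^ 8 * x ^ 5 * w * v ^ 2 - (36) * a ^ 8 * x ^ 5 * w * v ^ 3 + 70 * a ^ 8 * x ^ 5 * w ^ 2 * v ^ 2 - (4) * a ^ 8 * x ^ 6 - (10) * a ^ 8 * x ^ 6 * v ^ 2 - (16) * a ^ 8 * x ^ 6 * v ^ 3 + 2 * a ^ 8 * x ^ 6 * w + 32 * a ^ 8 * x ^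 6 * w * v ^ 2 + 46 * a ^ 8 * x ^ 6 * w * v ^ 3 + 56 * a ^ 8 * x ^ 6 * w ^ 2 * v ^ 2 - (7) * a ^ 8 * x ^ 7 * v ^ 2 - (7) * a ^ 8 * x ^ 7 * v ^ 3 - (6) * a ^ 8 * x ^ 7 * w + 10 * a ^ 8 * x ^ 7 * w * v ^ 2 + 9 * a ^ 8 * x ^ 7 * w * v ^ 3 - (17) * a ^ 8 * x ^ 7 * w ^ 2 * v ^ 2 + 4 * a ^ 8 * x ^ 8 * v ^ 2 + a ^ 8 * x ^ 8 * v ^ 3 - (9) * a ^ 8 * x ^ 8 * w * v ^ 2 - (4) * a ^ 8 * x ^ 8 * w * v ^ 3 - (10) * a ^ 8 * x ^ 8 * w ^ 2 * v ^ 2 + a ^ 8 * x ^ 9 * w * v ^ 2 + a ^ 8 * x ^ 9 * w ^ 2 * v ^ 2 - (20) * a ^ 9 * x ^ 2 * w ^ 2 * v ^ 2 - (1) * a ^ 9 * x ^ 3 + 12 * a ^ 9 * x ^ 3 * v ^ 2 + 16 * a ^ 9 * x ^ 3 * v ^ 3 + 4 * a ^ 9 * x ^ 3 * w - (29) * a ^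 9 * x ^ 3 * w * v ^ 2 - (30) * a ^ 9 * x ^ 3 * w * v ^ 3 + 15 * a ^ 9 * x ^ 3 * w ^ 2 * v ^ 2 - (2) * a ^ 9 * x ^ 4 + 3 * a ^ 9 * x ^ 4 * v ^ 2 - (3) * a ^ 9 * x ^ 4 * v ^ 3 + 4 * a ^ 9 * x ^ 4 * w + 6 * a ^ 9 * x ^ 4 * w * v ^ 2 + 26 * a ^ 9 * x ^ 4 * w * v ^ 3 + 70 * a ^ 9 * x ^ 4 * w ^ 2 * v ^ 2 - (1) * a ^ 9 * x ^ 5 - (16) * a ^ 9 * x ^ 5 * v ^ 2 - (24) * a ^ 9 * x ^ 5 * v ^ 3 - (4) * a ^ 9 * x ^ 5 * w + 43 * a ^ 9 * x ^ 5 * w * v ^ 2 + 53 * a ^ 9 * x ^ 5 * w * v ^ 3 + 6 * a ^ 9 * x ^ 5 * w ^ 2 * v ^ 2 - (1) * a ^ 9 * x ^ 6 * v ^ 2 - (2) * a ^ 9 * x ^ 6 * v ^ 3 - (4) * a ^ 9 * x ^ 6 * w - (9) * a ^ 9 * x ^ 6 * w * v ^ 2 - (14) * a ^ 9 * x ^ 6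 * w * v ^ 3 - (42) * a ^ 9 * x ^ 6 * w ^ 2 * v ^ 2 + 6 * a ^ 9 * x ^ 7 * v ^ 2 + 3 * a ^ 9 * x ^ 7 * v ^ 3 - (13) * a ^ 9 * x ^ 7 * w * v ^ 2 - (10) * a ^ 9 * x ^ 7 * w * v ^ 3 - (9) * a ^ 9 * x ^ 7 * w ^ 2 * v ^ 2 + 4 * a ^ 9 * x ^ 8 * w * v ^ 2 + a ^ 9 * x ^ 8 * w * v ^ 3 + 4 * a ^ 9 * x ^ 8 * w ^ 2 * v ^ 2 + 15 * a ^ 10 * x ^ 2 * w ^ 2 * v ^ 2 - (5) * a ^ 10 * x ^ 3 * v ^ 2 - (9) * a ^ 10 * x ^ 3 * v ^ 3 - (1) * a ^ 10 * x ^ 3 * w + 17 * a ^ 10 * x ^ 3 * w * v ^ 2 + 25 * a ^ 10 * x ^ 3 * w * v ^ 3 + 12 * a ^ 10 * x ^ 3 * w ^ 2 * v ^ 2 - (5) * a ^ 10 * x ^ 4 * v ^ 2 - (7) * a ^ 10 * x ^ 4 * v ^ 3 - (2) * a ^ 10 * x ^ 4 * w + 8 * a ^ 10 * x ^ 4 *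 w * v ^ 2 + 4 * a ^ 10 * x ^ 4 * w * v ^ 3 - (29) * a ^ 10 * x ^ 4 * w ^ 2 * v ^ 2 + 4 * a ^ 10 * x ^ 5 * v ^ 2 + 5 * a ^ 10 * x ^ 5 * v ^ 3 - (1) * a ^ 10 * x ^ 5 * w - (20) * a ^ 10 * x ^ 5 * w * v ^ 2 - (29) * a ^ 10 * x ^ 5 * w * v ^ 3 - (29) * a ^ 10 * x ^ 5 * w ^ 2 * v ^ 2 + 4 * a ^ 10 * x ^ 6 * v ^ 2 + 3 * a ^ 10 * x ^ 6 * v ^ 3 - (5) * a ^ 10 * x ^ 6 * w * v ^ 2 - (5) * a ^ 10 * x ^ 6 * w * v ^ 3 + 3 * a ^ 10 * x ^ 6 * w ^ 2 * v ^ 2 + 6 * a ^ 10 * x ^ 7 * w * v ^ 2 + 3 * a ^ 10 * x ^ 7 * w * v ^ 3 + 6 * a ^ 10 * x ^ 7 * w ^ 2 * v ^ 2 - (6) * a ^ 11 * x ^ 2 * w ^ 2 * v ^ 2 + a ^ 11 * x ^ 3 * v ^ 2 + 2 * a ^ 11 * x ^ 3 * v ^ 3 - (6) * a ^ 11 * x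 ^ 3 * w * v ^ 2 - (11) * a ^ 11 * x ^ 3 * w * v ^ 3 - (12) * a ^ 11 * x ^ 3 * w ^ 2 * v ^ 2 + 2 * a ^ 11 * x ^ 4 * v ^ 2 + 3 * a ^ 11 * x ^ 4 * v ^ 3 - (7) * a ^ 11 * x ^ 4 * w * v ^ 2 - (10) * a ^ 11 * x ^ 4 * w * v ^ 3 - (2) * a ^ 11 * x ^ 4 * w ^ 2 * v ^ 2 + a ^ 11 * x ^ 5 * v ^ 2 + a ^ 11 * x ^ 5 * v ^ 3 + 3 * a ^ 11 * x ^ 5 * w * v ^ 2 + 4 * a ^ 11 * x ^ 5 * w * v ^ 3 + 8 * a ^ 11 * x ^ 5 * w ^ 2 * v ^ 2 + 4 * a ^ 11 * x ^ 6 * w * v ^ 2 + 3 * a ^ 11 * x ^ 6 * w * v ^ 3 + 4 * a ^ 11 * x ^ 6 * w ^ 2 * v ^ 2 + a ^ 12 * x ^ 2 * w ^ 2 * v ^ 2 + a ^ 12 * x ^ 3 * w * v ^ 2 + 2 * a ^ 12 * x ^ 3 * w * v ^ 3 + 3 * a ^ 12 * x ^ 3 * w ^ 2 * v ^ 2 +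 2 * a ^ 12 * x ^ 4 * w * v ^ 2 + 3 * a ^ 12 * x ^ 4 * w * v ^ 3 + 3 * a ^ 12 * x ^ 4 * w ^ 2 * v ^ 2 + a ^ 12 * x ^ 5 * w * v ^ 2 + a ^ 12 * x ^ 5 * w * v ^ 3 + a ^ 12 * x ^ 5 * w ^ 2 * v ^ 2) * r1 + ((-1) * a ^ 3 * x ^ 5 * v ^ 2 + a ^ 3 * x ^ 7 * v ^ 2 - (2) * a ^ 4 * x ^ 4 * v ^ 2 - (1) * a ^ 4 * x ^ 5 + 6 * a ^ 4 * x ^ 5 * v ^ 2 + 4 * a ^ 4 * x ^ 6 * v ^ 2 + 2 * a ^ 4 * x ^ 7 - (5) * a ^ 4 * x ^ 7 * v ^ 2 - (1) * a ^ 4 * x ^ 8 * v ^ 2 - (1) * a ^ 4 * x ^ 9 - (1) * a ^ 5 * x ^ 3 * v ^ 2 - (2) * a ^ 5 * x ^ 4 + 12 * a ^ 5 * x ^ 4 * v ^ 2 + 3 * a ^ 5 * x ^ 5 - (1) * a ^ 5 * x ^ 5 * v - (9) * a ^ 5 * x ^ 5 * v ^ 2 + 6 * a ^ 5 * x ^ 6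 - (19) * a ^ 5 * x ^ 6 * v ^ 2 - (4) * a ^ 5 * x ^ 7 + 2 * a ^ 5 * x ^ 7 * v + 6 * a ^ 5 * x ^ 7 * v ^ 2 - (4) * a ^ 5 * x ^ 8 + 3 * a ^ 5 * x ^ 8 * v ^ 2 + a ^ 5 * x ^ 9 - (1) * a ^ 5 * x ^ 9 * v - (1) * a ^ 6 * x ^ 3 + 6 * a ^ 6 * x ^ 3 * v ^ 2 + 6 * a ^ 6 * x ^ 4 - (2) * a ^ 6 * x ^ 4 * v - (26) * a ^ 6 * x ^ 4 * v ^ 2 + 3 * a ^ 6 * x ^ 5 + 3 * a ^ 6 * x ^ 5 * v - (7) * a ^ 6 * x ^ 5 * v ^ 2 - (12) * a ^ 6 * x ^ 6 + 6 * a ^ 6 * x ^ 6 * v + 30 * a ^ 6 * x ^ 6 * v ^ 2 - (4) * a ^ 6 * x ^ 7 - (4) * a ^ 6 * x ^ 7 * v + 2 * a ^ 6 * x ^ 7 * v ^ 2 + 4 * a ^ 6 * x ^ 8 - (4) * a ^ 6 * x ^ 8 * v - (3) * a ^ 6 * x ^ 8 * v ^ 2 + a ^ 6 * x ^ 9 *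 v + 3 * a ^ 7 * x ^ 3 - (1) * a ^ 7 * x ^ 3 * v - (14) * a ^ 7 * x ^ 3 * v ^ 2 - (4) * a ^ 7 * x ^ 4 + 6 * a ^ 7 * x ^ 4 * v + 23 * a ^ 7 * x ^ 4 * v ^ 2 - (11) * a ^ 7 * x ^ 5 + 3 * a ^ 7 * x ^ 5 * v + 29 * a ^ 7 * x ^ 5 * v ^ 2 + 2 * a ^ 7 * x ^ 6 - (12) * a ^ 7 * x ^ 6 * v - (16) * a ^ 7 * x ^ 6 * v ^ 2 + 6 * a ^ 7 * x ^ 7 - (4) * a ^ 7 * x ^ 7 * v - (7) * a ^ 7 * x ^ 7 * v ^ 2 + 4 * a ^ 7 * x ^ 8 * v + a ^ 7 * x ^ 8 * v ^ 2 - (3) * a ^ 8 * x ^ 3 + 3 * a ^ 8 * x ^ 3 * v + 16 * a ^ 8 * x ^ 3 * v ^ 2 - (2) * a ^ 8 * x ^ 4 - (4) * a ^ 8 * x ^ 4 * v - (3) * a ^ 8 * x ^ 4 * v ^ 2 + 5 * a ^ 8 * x ^ 5 - (11) * a ^ 8 * x ^ 5 * v - (24) * a ^ 8 * x ^ 5 *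 v ^ 2 + 4 * a ^ 8 * x ^ 6 + 2 * a ^ 8 * x ^ 6 * v - (2) * a ^ 8 * x ^ 6 * v ^ 2 + 6 * a ^ 8 * x ^ 7 * v + 3 * a ^ 8 * x ^ 7 * v ^ 2 + a ^ 9 * x ^ 3 - (3) * a ^ 9 * x ^ 3 * v - (9) * a ^ 9 * x ^ 3 * v ^ 2 + 2 * a ^ 9 * x ^ 4 - (2) * a ^ 9 * x ^ 4 * v - (7) * a ^ 9 * x ^ 4 * v ^ 2 + a ^ 9 * x ^ 5 + 5 * a ^ 9 * x ^ 5 * v + 5 * a ^ 9 * x ^ 5 * v ^ 2 + 4 * a ^ 9 * x ^ 6 * v + 3 * a ^ 9 * x ^ 6 * v ^ 2 + a ^ 10 * x ^ 3 * v + 2 * a ^ 10 * x ^ 3 * v ^ 2 + 2 * a ^ 10 * x ^ 4 * v + 3 * a ^ 10 * x ^ 4 * v ^ 2 + a ^ 10 * x ^ 5 * v + a ^ 10 * x ^ 5 * v ^ 2) * r2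

lemma hx2 (u : ℂ) : φ (px2 u) ≠ 0 :=
  RatFunc.algebraMap_ne_zero (mul_ne_zero (mul_ne_zero Polynomial.X_ne_zero hX1) (hXC u))

lemma hx3 (u : ℂ) : φ (px3 u) ≠ 0 :=
  RatFunc.algebraMap_ne_zero (mul_ne_zero (mul_ne_zero Polynomial.X_ne_zero hX1) (hXC (u - 1)))

lemma hx4 (u : ℂ) : φ (px4 u) ≠ 0 :=
  RatFunc.algebraMap_ne_zero (mul_ne_zero (pow_ne_zero 2 Polynomial.X_ne_zero) (hXC u))

lemma hx5 (u : ℂ) : φ (px5 u) ≠ 0 :=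
  RatFunc.algebraMap_ne_zero (mul_ne_zero (mul_ne_zero hX1 (hXC u)) (hXC (u - 1)))

lemma hx6 {u : ℂ} (hu1 : u ≠ 1) : φ (px6 u) ≠ 0 :=
  RatFunc.algebraMap_ne_zero (mul_ne_zero (mul_ne_zero
    (by rw [Polynomial.C_ne_zero]; exact sub_ne_zero.mpr (Ne.symm hu1))
    (pow_ne_zero 2 Polynomial.X_ne_zero)) hX1)

lemma hx7 {u : ℂ} (hu0 : u ≠ 0) (hu1 : u ≠ 1) : φ (px7 u) ≠ 0 := by
  refine RatFunc.algebraMap_ne_zero (mul_ne_zero ?_ ?_)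
  · rw [Polynomial.C_ne_zero]
    exact mul_ne_zero hu0 (pow_ne_zero 2 (inv_ne_zero (sub_ne_zero.mpr hu1)))
  · exact mul_ne_zero (mul_ne_zero (mul_ne_zero Polynomial.X_ne_zero hX1) (hXC u)) (hXC (u - 1))

lemma ha3 (u : ℂ) : (E₂ u).a₃ ≠ 0 := by
  rw [E₂_a₃]
  refine RatFunc.algebraMap_ne_zero (neg_ne_zero.mpr ?_)
  exact mul_ne_zero (mul_ne_zero (mul_ne_zero (pow_ne_zero 2 Polynomial.X_ne_zero) hX1) (hXC u))
    (hXC (u - 1))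

lemma hqne (u : ℂ) :
    (1 + C (6 - 11 * u) * X + C (1 - 8 * u - u * u) * X ^ 2 - C u * X ^ 3 : Polynomial ℂ) ≠ 0 := by
  intro h
  have := congrArg (Polynomial.eval 0) h
  simp at this

set_option maxHeartbeats 2000000 in
lemma deltane {u : ℂ} (hu0 : u ≠ 0) (hu1 : u ≠ 1) : (E₂ u).Δ ≠ 0 := by
  have h : (E₂ u).Δ = φ (dpoly u) := by
    simp only [WeierstrassCurve.Δ, WeierstrassCurve.b₂, WeierstrassCurve.b₄,
      WeierstrassCurve.b₆, WeierstrassCurve.b₈]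
    simp only [E₂_a₁, E₂_a₂, E₂_a₃, E₂_a₄, E₂_a₆, px2, py2, px3, py3, px4, py4, px5, py5, px6, py6, px7, py7, px8, py8, dpoly, map_add, map_sub, map_mul, map_pow, map_neg, map_one, map_ofNat, map_zero, map_inv₀, RatFunc.algebraMap_C, RatFunc.algebraMap_X]
    ring
  rw [h]
  refine RatFunc.algebraMap_ne_zero ?_
  unfold dpoly
  exact mul_ne_zero (mul_ne_zero (mul_ne_zero (mul_ne_zero
    (pow_ne_zero 5 Polynomial.X_ne_zero) (pow_ne_zero 4 hX1))
    (pow_ne_zero 3 (hXC u))) (pow_ne_zero 2 (hXC (u - 1)))) (hqne u)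

lemma hy0 (u : ℂ) : (0 : RatFunc ℂ) ≠ (E₂ u).negY 0 0 := by
  intro h
  apply ha3 u
  have : (E₂ u).negY 0 0 = -(E₂ u).a₃ := by
    simp [WeierstrassCurve.Affine.negY]
  rw [this] at h
  exact neg_eq_zero.mp h.symm

set_option maxHeartbeats 2000000 in
lemma dbl {u : ℂ} [DecidableEq (RatFunc ℂ)] (h₀ : (E₂ u).Nonsingular 0 0)
    (h₂ : (E₂ u).Nonsingular (φ (px2 u)) (φ (py2 u))) :
    WeierstrassCurve.Affine.Point.some _ _ h₀ + WeierstrassCurve.Affine.Point.some _ _ h₀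
      = WeierstrassCurve.Affine.Point.some _ _ h₂ := by
  rw [WeierstrassCurve.Affine.Point.add_self_of_Y_ne (hy0 u)]
  have hs : (E₂ u).slope 0 0 0 0 = 0 := by
    rw [WeierstrassCurve.Affine.slope_of_Y_ne rfl (hy0 u)]
    simp [E₂_a₄]
  refine some_congr ?_ ?_ h₂
  · rw [hs, WeierstrassCurve.Affine.addX]
    simp only [E₂_a₁, E₂_a₂, E₂_a₃, E₂_a₄, E₂_a₆, px2, py2, px3, py3, px4, py4, px5, py5, px6, py6, px7, py7, px8, py8, dpoly, map_add, map_sub, map_mul, map_pow, map_neg, map_one, map_ofNat, map_zero, map_inv₀, RatFunc.algebraMap_C, RatFunc.algebraMap_X]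
    ring
  · rw [WeierstrassCurve.Affine.addY, WeierstrassCurve.Affine.negAddY,
      WeierstrassCurve.Affine.addX, hs, WeierstrassCurve.Affine.negY]
    simp only [E₂_a₁, E₂_a₂, E₂_a₃, E₂_a₄, E₂_a₆, px2, py2, px3, py3, px4, py4, px5, py5, px6, py6, px7, py7, px8, py8, dpoly, map_add, map_sub, map_mul, map_pow, map_neg, map_one, map_ofNat, map_zero, map_inv₀, RatFunc.algebraMap_C, RatFunc.algebraMap_X]
    ring

end Stmt5Aux

open scoped Classical in
open Stmt5Aux in
theorem stmt_5 (u : ℂ) (hu0 : u ≠ 0) (hu1 : u ≠ 1) :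
    ∃ h : (E₂ u).Nonsingular 0 0,
      ∀ m : ℕ, 1 ≤ m → m ≤ 8 →
        IsIntegralPoint 2 (m • (WeierstrassCurve.Affine.Point.some 0 0 h)) := by
  have hΔ := deltane hu0 hu1
  have n0 : (E₂ u).Nonsingular 0 0 :=
    ((E₂ u).equation_iff_nonsingular_of_Δ_ne_zero hΔ).mp
      ((E₂ u).equation_zero.mpr rfl)
  have n2 := ((E₂ u).equation_iff_nonsingular_of_Δ_ne_zero hΔ).mp (eqn2 u)
  have n3 := ((E₂ u).equation_iff_nonsingular_of_Δ_ne_zero hΔ).mp (eqn3 u)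
  have n4 := ((E₂ u).equation_iff_nonsingular_of_Δ_ne_zero hΔ).mp (eqn4 u)
  have n5 := ((E₂ u).equation_iff_nonsingular_of_Δ_ne_zero hΔ).mp (eqn5 u)
  have n6 := ((E₂ u).equation_iff_nonsingular_of_Δ_ne_zero hΔ).mp (eqn6 u)
  have n7 := ((E₂ u).equation_iff_nonsingular_of_Δ_ne_zero hΔ).mp (eqn7 hu0 hu1)
  have n8 := ((E₂ u).equation_iff_nonsingular_of_Δ_ne_zero hΔ).mp (eqn8 hu0 hu1)
  have s2 : (2 : ℕ) • WeierstrassCurve.Affine.Point.some _ _ n0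
      = WeierstrassCurve.Affine.Point.some _ _ n2 := by
    rw [two_nsmul]; exact dbl n0 n2
  have s3 : (3 : ℕ) • WeierstrassCurve.Affine.Point.some _ _ n0
      = WeierstrassCurve.Affine.Point.some _ _ n3 := by
    rw [show (3 : ℕ) = 2 + 1 from rfl, succ_nsmul, s2]
    exact add_eq n2 n0 n3 (hx2 u) (hA2 u) (hB2 u)
  have s4 : (4 : ℕ) • WeierstrassCurve.Affine.Point.some _ _ n0
      = WeierstrassCurve.Affine.Point.some _ _ n4 := by
    rw [show (4 : ℕ) = 3 + 1 from rfl, succ_nsmul, s3]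
    exact add_eq n3 n0 n4 (hx3 u) (hA3 u) (hB3 u)
  have s5 : (5 : ℕ) • WeierstrassCurve.Affine.Point.some _ _ n0
      = WeierstrassCurve.Affine.Point.some _ _ n5 := by
    rw [show (5 : ℕ) = 4 + 1 from rfl, succ_nsmul, s4]
    exact add_eq n4 n0 n5 (hx4 u) (hA4 u) (hB4 u)
  have s6 : (6 : ℕ) • WeierstrassCurve.Affine.Point.some _ _ n0
      = WeierstrassCurve.Affine.Point.some _ _ n6 := by
    rw [show (6 : ℕ) = 5 + 1 from rfl, succ_nsmul, s5]
    exact add_eq n5 n0 n6 (hx5 u) (hA5 u) (hB5 u)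
  have s7 : (7 : ℕ) • WeierstrassCurve.Affine.Point.some _ _ n0
      = WeierstrassCurve.Affine.Point.some _ _ n7 := by
    rw [show (7 : ℕ) = 6 + 1 from rfl, succ_nsmul, s6]
    exact add_eq n6 n0 n7 (hx6 hu1) (hA6 hu0 hu1) (hB6 hu0 hu1)
  have s8 : (8 : ℕ) • WeierstrassCurve.Affine.Point.some _ _ n0
      = WeierstrassCurve.Affine.Point.some _ _ n8 := by
    rw [show (8 : ℕ) = 7 + 1 from rfl, succ_nsmul, s7]
    exact add_eq n7 n0 n8 (hx7 hu0 hu1) (hA7 hu0 hu1) (hB7 hu0 hu1)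
  refine ⟨n0, ?_⟩
  intro m hm1 hm8
  interval_cases m
  · exact ⟨0, 0, n0, 0, 0, by rw [one_nsmul], (map_zero _).symm, (map_zero _).symm,
      by simp, by simp⟩
  · exact ⟨_, _, n2, px2 u, py2 u, s2, rfl, rfl,
      by unfold px2; compute_degree!, by unfold py2; compute_degree!⟩
  · exact ⟨_, _, n3, px3 u, py3 u, s3, rfl, rfl,
      by unfold px3; compute_degree!, by unfold py3; compute_degree!⟩
  · exact ⟨_, _, n4, px4 u, py4 u, s4, rfl, rfl,
      by unfold px4; compute_degree!, by unfold py4; compute_degree!⟩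
  · exact ⟨_, _, n5, px5 u, py5 u, s5, rfl, rfl,
      by unfold px5; compute_degree!, by unfold py5; compute_degree!⟩
  · exact ⟨_, _, n6, px6 u, py6 u, s6, rfl, rfl,
      by unfold px6; compute_degree!, by unfold py6; compute_degree!⟩
  · exact ⟨_, _, n7, px7 u, py7 u, s7, rfl, rfl,
      by unfold px7; compute_degree!, by unfold py7; compute_degree!⟩
  · exact ⟨_, _, n8, px8 u, py8 u, s8, rfl, rfl,
      by unfold px8; compute_degree!, by unfold py8; compute_degree!⟩
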